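/- For every n ≥ 4, the total number of spanning rooted forests of the T-caterpillar T_n equals 4·F(2n−3). -/

import Mathlib

/-- A spanning rooted forest of a graph `G`: a spanning acyclic subgraph (given by its
edge set) together with a set of roots containing exactly one root in each tree
(connected component). -/
structure RootedForest {V : Type*} (G : SimpleGraph V) where
  edges : Set (Sym2 V)
  roots : Set V
  edges_sub : edges ⊆ G.edgeSet
  acyclic : (SimpleGraph.fromEdgeSet edges).IsAcyclic
  unique_root : ∀ v : V, ∃! r, r ∈ roots ∧ (SimpleGraph.fromEdgeSet edges).Reachable v r

/-- The T-caterpillar `T_n` on vertices `{0, …, n-1}` (0-indexed version of `{1, …, n}`):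
edges (0,2), (1,2), and (i, i+1) for 2 ≤ i ≤ n-2. -/
def tCaterpillar (n : ℕ) : SimpleGraph (Fin n) :=
  SimpleGraph.fromRel fun i j =>
    (i.val = 0 ∧ j.val = 2) ∨ (i.val = 1 ∧ j.val = 2) ∨ (2 ≤ i.val ∧ j.val = i.val + 1)

namespace RFAux
open SimpleGraph Walk



variable {V : Type*} {G : SimpleGraph V}

/-- getVert is injective on paths. -/
lemma isPath_getVert_inj {u v : V} {p : G.Walk u v} (hp : p.IsPath) :
    ∀ {i j : ℕ}, i ≤ p.length → j ≤ p.length → p.getVert i = p.getVert j → i = j := by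
  induction p with
  | nil =>
    intro i j hi hj _
    simp only [Walk.length_nil, Nat.le_zero] at hi hj
    omega
  | cons h q ih =>
    rename_i a b c
    intro i j hi hj hij
    rw [Walk.cons_isPath_iff] at hp
    match i, j with
    | 0, 0 => rfl
    | 0, j+1 =>
      exfalso
      rw [Walk.getVert_zero, Walk.getVert_cons_succ] at hij
      exact hp.2 (Walk.mem_support_iff_exists_getVert.mpr ⟨j, hij.symm, by simpa using hj⟩)
    | i+1, 0 =>
      exfalso
      rw [Walk.getVert_zero, Walk.getVert_cons_succ] at hij
      exact hp.2 (Walk.mem_support_iff_exists_getVert.mpr ⟨i, hij, by simpa using hi⟩)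
    | i+1, j+1 =>
      rw [Walk.getVert_cons_succ, Walk.getVert_cons_succ] at hij
      have := ih hp.1 (by simpa using hi) (by simpa using hj) hij
      omega

/-- A subgraph of an acyclic graph is acyclic. -/
lemma isAcyclic_anti {H : SimpleGraph V} (hle : H ≤ G) (hG : G.IsAcyclic) : H.IsAcyclic := by
  intro v c hc
  exact hG (c.map (SimpleGraph.Hom.ofLE hle))
    (hc.map (f := SimpleGraph.Hom.ofLE hle) (fun a b => id))

/-- In a path, an edge containing the start vertex must be the first edge. -/
lemma isPath_edge_start {a c x : V} {P : G.Walk a c} (hP : P.IsPath)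
    (hm : s(a, x) ∈ P.edges) : P.getVert 1 = x := by
  cases P with
  | nil => simp at hm
  | cons h q =>
    rename_i b
    rw [Walk.cons_isPath_iff] at hP
    rw [Walk.edges_cons, List.mem_cons] at hm
    rcases hm with hm | hm
    · rw [Sym2.eq_iff] at hm
      rcases hm with ⟨-, rfl⟩ | ⟨h1, h2⟩
      · exact (Walk.getVert_cons_succ (n := 0) _ h).trans (Walk.getVert_zero _)
      · exact absurd h1 h.ne
    · exact absurd (Walk.fst_mem_support_of_mem_edges q hm) hP.2




variable {V : Type*} {G : SimpleGraph V}

def IsPM (G : SimpleGraph V) (p : V → Option V) : Prop :=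
  (∀ v w, p v = some w → G.Adj v w) ∧ ∀ v w, p v = some w → p w ≠ some v

def pmEdges (p : V → Option V) : Set (Sym2 V) := {e | ∃ v w, p v = some w ∧ e = s(v, w)}

def pmG (p : V → Option V) : SimpleGraph V := SimpleGraph.fromEdgeSet (pmEdges p)

def pnext (p : V → Option V) : V → V := fun v => (p v).getD v

lemma pmEdges_sub {p : V → Option V} (hp : IsPM G p) : pmEdges p ⊆ G.edgeSet := by
  rintro e ⟨v, w, hv, rfl⟩
  exact (hp.1 v w hv)

lemma pmG_le {p : V → Option V} (hp : IsPM G p) : pmG p ≤ G := by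
  calc pmG p ≤ SimpleGraph.fromEdgeSet G.edgeSet := fromEdgeSet_mono (pmEdges_sub hp)
  _ = G := fromEdgeSet_edgeSet G

lemma pmG_adj {p : V → Option V} (hp : IsPM G p) {a b : V} :
    (pmG p).Adj a b ↔ (p a = some b ∨ p b = some a) := by
  rw [pmG, fromEdgeSet_adj]
  constructor
  · rintro ⟨⟨v, w, hv, he⟩, hab⟩
    rw [Sym2.eq_iff] at he
    rcases he with ⟨rfl, rfl⟩ | ⟨rfl, rfl⟩
    · exact Or.inl hv
    · exact Or.inr hv
  · rintro (h | h)
    · exact ⟨⟨a, b, h, rfl⟩, (hp.1 _ _ h).ne⟩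
    · exact ⟨⟨b, a, h, Sym2.eq_swap⟩, (hp.1 _ _ h).ne'⟩

lemma pmG_adj_pnext {p : V → Option V} (hp : IsPM G p) {v : V} (h : (p v).isSome) :
    (pmG p).Adj v (pnext p v) := by
  obtain ⟨w, hw⟩ := Option.isSome_iff_exists.mp h
  rw [pnext, hw]
  exact (pmG_adj hp).mpr (Or.inl (by simpa using hw))

/-- The walk following the parent function for `k` steps. -/
def chainW (p : V → Option V) (hp : IsPM G p) :
    ∀ (v : V) (k : ℕ), (∀ i < k, (p ((pnext p)^[i] v)).isSome) → (pmG p).Walk v ((pnext p)^[k] v)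
  | v, 0, _ => Walk.nil.copy rfl (by simp)
  | v, k+1, h =>
    (Walk.cons (pmG_adj_pnext hp (by simpa using h 0 (Nat.succ_pos k)))
      (chainW p hp (pnext p v) k (fun i hi => by
        rw [← Function.iterate_succ_apply]
        exact h (i+1) (by omega)))).copy rfl (Function.iterate_succ_apply (pnext p) k v).symm

@[simp] lemma chainW_length {p : V → Option V} (hp : IsPM G p) (v : V) (k : ℕ) (h) :
    (chainW p hp v k h).length = k := by
  induction k generalizing v with
  | zero => simp [chainW]
  | succ k ih => simp [chainW, ih]

lemma chainW_getVert_one {p : V → Option V} (hp : IsPM G p) (v : V) (k : ℕ) (h) (hk : 0 < k) :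
    (chainW p hp v k h).getVert 1 = pnext p v := by
  match k with
  | k+1 =>
    rw [chainW]
    rw [Walk.getVert_copy]
    exact (Walk.getVert_cons_succ (n := 0) _ _).trans (Walk.getVert_zero _)

lemma chainW_support {p : V → Option V} (hp : IsPM G p) (v : V) (k : ℕ) (h) :
    (chainW p hp v k h).support = (List.range (k+1)).map (fun i => (pnext p)^[i] v) := by
  induction k generalizing v with
  | zero => simp [chainW]
  | succ k ih =>
    rw [chainW]
    rw [Walk.support_copy, Walk.support_cons, ih]
    conv_rhs => rw [List.range_succ_eq_map]
    simp only [List.map_cons, Function.iterate_zero, id_eq, List.map_map, List.cons.injEq,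
      true_and]
    apply List.map_congr_left
    intro i _
    rw [Function.comp_apply, Function.iterate_succ_apply]




variable {V : Type*} {G : SimpleGraph V}

section Chain

variable {p : V → Option V}

lemma chainW_getVert (hp : IsPM G p) (v : V) (k : ℕ) (h) {i : ℕ} (hi : i ≤ k) :
    (chainW p hp v k h).getVert i = (pnext p)^[i] v := by
  induction k generalizing v i with
  | zero =>
    interval_cases i
    simp [chainW]
  | succ k ih =>
    rw [chainW, Walk.getVert_copy]
    match i with
    | 0 => simp
    | i+1 =>
      rw [Walk.getVert_cons_succ, ih _ _ (by omega), ← Function.iterate_succ_apply]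

lemma chainW_isPath (hp : IsPM G p) (hacyc : (pmG p).IsAcyclic) :
    ∀ (k : ℕ) (v : V) (h), (chainW p hp v k h).IsPath := by
  intro k
  induction k using Nat.strong_induction_on with
  | _ k ihk =>
  match k with
  | 0 => intro v h; simp [chainW]
  | k+1 =>
    intro v h
    rw [chainW, Walk.isPath_copy, Walk.cons_isPath_iff]
    refine ⟨ihk k (by omega) _ _, fun hm => ?_⟩
    rw [chainW_support] at hm
    simp only [List.mem_map, List.mem_range] at hm
    obtain ⟨i, hik, hiv⟩ := hm
    have hiv' : (pnext p)^[i+1] v = v := by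
      rw [Function.iterate_succ_apply]; exact hiv
    have hsome0 : p v = some (pnext p v) := by
      have h0 := h 0 (Nat.succ_pos k)
      simp only [Function.iterate_zero, id_eq] at h0
      obtain ⟨w, hw⟩ := Option.isSome_iff_exists.mp h0
      rw [hw, pnext, hw]; rfl
    classical
    have hex : ∃ j, (pnext p)^[j+1] v = v := ⟨i, hiv'⟩
    obtain ⟨j, hj, hmin⟩ : ∃ j, ((pnext p)^[j+1] v = v ∧ ∀ m < j, (pnext p)^[m+1] v ≠ v) :=
      ⟨Nat.find hex, Nat.find_spec hex, fun m hm => Nat.find_min hex hm⟩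
    have hji : j ≤ i := by
      by_contra hc
      exact hmin i (by omega) hiv'
    rcases j with _ | _ | j'
    · -- j = 0 : self-loop
      have hv : pnext p v = v := by simpa using hj
      have hvv : p v = some v := by rw [hsome0, hv]
      exact (hp.1 v v hvv).ne rfl
    · -- j = 1 : 2-cycle
      have h1 : (p (pnext p v)).isSome := by
        have := h 1 (by omega)
        simpa using this
      obtain ⟨w, hw⟩ := Option.isSome_iff_exists.mp h1
      have hwv : w = v := by
        have h2 : pnext p (pnext p v) = v := by
          have := hj
          rw [show (1:ℕ)+1 = 2 from rfl] at this
          simpa [Function.iterate_succ_apply'] using this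
        rw [pnext, hw] at h2; simpa using h2
      exact hp.2 v (pnext p v) hsome0 (by rw [hw, hwv])
    · -- j = j'+2 : a genuine cycle
      have hsub : ∀ m < j'+2, (p ((pnext p)^[m] (pnext p v))).isSome := by
        intro m hm
        rw [← Function.iterate_succ_apply]
        exact h (m+1) (by omega)
      have hend : (pnext p)^[j'+2] (pnext p v) = v := by
        rw [← Function.iterate_succ_apply]
        exact hj
      set Q : (pmG p).Walk (pnext p v) v :=
        (chainW p hp (pnext p v) (j'+2) hsub).copy rfl hend with hQdef
      have hQpath : Q.IsPath := by
        rw [hQdef, Walk.isPath_copy]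
        exact ihk (j'+2) (by omega) _ _
      have hadj : (pmG p).Adj v (pnext p v) := pmG_adj_pnext hp (by simpa using h 0 (by omega))
      have hlen : Q.length = j'+2 := (Walk.length_copy _ _ _).trans (chainW_length hp _ _ _)
      have hedge : s(v, pnext p v) ∉ Q.edges := by
        intro hme
        have hrev : Q.reverse.IsPath := hQpath.reverse
        have hmem : s(v, pnext p v) ∈ Q.reverse.edges := by
          rw [Walk.edges_reverse, List.mem_reverse]; exact hme
        have h1 := isPath_edge_start hrev hmem
        rw [Walk.getVert_reverse, hlen] at h1
        rw [hQdef, Walk.getVert_copy, chainW_getVert hp _ _ _ (by omega)] at h1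
        -- h1 : (pnext p)^[j'+2-1] (pnext p v) = pnext p v
        have h2 : (pnext p)^[j'+2] v = pnext p v := by
          rw [Function.iterate_succ_apply]
          simpa using h1
        have h3 : (pnext p)^[1+1] v = v := by
          have := hj
          rw [Function.iterate_succ_apply', h2] at this
          rw [show (1:ℕ)+1 = 2 from rfl]
          simpa [Function.iterate_succ_apply'] using this
        exact hmin 1 (by omega) h3
      exact hacyc _ (SimpleGraph.Path.cons_isCycle ⟨Q, hQpath⟩ hadj hedge)

lemma exists_root_path [Fintype V] (hp : IsPM G p) (hacyc : (pmG p).IsAcyclic) (v : V) :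
    ∃ (r : V) (W : (pmG p).Walk v r), W.IsPath ∧ p r = none ∧
      ∀ w, p v = some w → W.getVert 1 = w := by
  classical
  have hex : ∃ k, ¬ (p ((pnext p)^[k] v)).isSome := by
    by_contra hall
    push_neg at hall
    have hW := chainW_isPath hp hacyc (Fintype.card V) v (fun i _ => by simpa using hall i)
    have := hW.length_lt
    rw [chainW_length] at this
    omega
  set k₀ := Nat.find hex with hk₀def
  have hk₀ : ¬ (p ((pnext p)^[k₀] v)).isSome := Nat.find_spec hex
  have hmin : ∀ i < k₀, (p ((pnext p)^[i] v)).isSome := by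
    intro i hi
    by_contra hc
    have hle : Nat.find hex ≤ i := Nat.find_le hc
    rw [← hk₀def] at hle
    omega
  refine ⟨(pnext p)^[k₀] v, chainW p hp v k₀ hmin, chainW_isPath hp hacyc k₀ v hmin,
    Option.not_isSome_iff_eq_none.mp hk₀, ?_⟩
  intro w hw
  have hk₀pos : 0 < k₀ := by
    rcases Nat.eq_zero_or_pos k₀ with h0 | h
    · exfalso; rw [h0] at hk₀; simp [hw] at hk₀
    · exact h
  rw [chainW_getVert hp _ _ _ (by omega)]
  simp [pnext, hw]

lemma orient {H : SimpleGraph V} {q : V → Option V}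
    (hcompat : ∀ a b, H.Adj a b → q a = some b ∨ q b = some a) {r u : V} {W : H.Walk r u}
    (hW : W.IsPath) (hr : q r = none) :
    ∀ i, i < W.length → q (W.getVert (i+1)) = some (W.getVert i) := by
  intro i
  induction i with
  | zero =>
    intro h0
    rcases hcompat _ _ (W.adj_getVert_succ h0) with hc | hc
    · rw [W.getVert_zero, hr] at hc; exact absurd hc (by simp)
    · rw [W.getVert_zero] at hc ⊢; exact hc
  | succ i ih =>
    intro hsi
    have IH := ih (by omega)
    rcases hcompat _ _ (W.adj_getVert_succ hsi) with hc | hc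
    · exfalso
      rw [IH] at hc
      have heq : W.getVert i = W.getVert (i+1+1) := by
        exact Option.some_inj.mp hc
      have := isPath_getVert_inj hW (by omega) (by omega) heq
      omega
    · exact hc

end Chain

section Forest

variable [Fintype V] [DecidableEq V] {p : V → Option V}

noncomputable def toForest (p : V → Option V) (hp : IsPM G p) (hacyc : G.IsAcyclic) :
    RootedForest G where
  edges := pmEdges p
  roots := {v | p v = none}
  edges_sub := pmEdges_sub hp
  acyclic := isAcyclic_anti (pmG_le hp) hacyc
  unique_root := by
    intro v
    have hacyc' : (pmG p).IsAcyclic := isAcyclic_anti (pmG_le hp) hacyc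
    obtain ⟨r, W, hWp, hr, -⟩ := exists_root_path hp hacyc' v
    refine ⟨r, ⟨hr, W.reachable⟩, ?_⟩
    rintro r' ⟨hr', hreach'⟩
    by_contra hne
    have hreach : (pmG p).Reachable r r' := (W.reachable.symm.trans hreach')
    have hP := hreach.some.toPath.2
    set P := hreach.some.toPath.1 with hPdef
    have hlen : 1 ≤ P.length := by
      rcases Nat.eq_zero_or_pos P.length with h0 | h
      · exact absurd (Walk.eq_of_length_eq_zero h0).symm hne
      · exact h
    have hcompat : ∀ a b, (pmG p).Adj a b → p a = some b ∨ p b = some a :=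
      fun a b hab => (pmG_adj hp).mp hab
    have horient := orient hcompat hP hr (P.length - 1) (by omega)
    rw [show P.length - 1 + 1 = P.length by omega, Walk.getVert_length] at horient
    rw [Set.mem_setOf_eq] at hr'
    rw [hr'] at horient
    cases horient

lemma toForest_inj {q : V → Option V} (hp : IsPM G p) (hq : IsPM G q) (hacyc : G.IsAcyclic)
    (heq : toForest p hp hacyc = toForest q hq hacyc) : p = q := by
  have hedges : pmEdges p = pmEdges q := congrArg RootedForest.edges heq
  have hroots : {v | p v = none} = {v | q v = none} := congrArg RootedForest.roots heq
  have hG' : pmG p = pmG q := by rw [pmG, pmG, hedges]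
  have hacyc' : (pmG p).IsAcyclic := isAcyclic_anti (pmG_le hp) hacyc
  funext v
  cases hv : p v with
  | none =>
    have hm : v ∈ {v | q v = none} := by rw [← hroots]; exact hv
    exact (Set.mem_setOf_eq ▸ hm).symm
  | some w =>
    obtain ⟨r, W, hWp, hr, hget⟩ := exists_root_path hp hacyc' v
    have hget1 : W.getVert 1 = w := hget w hv
    have hqr : q r = none := by
      have hm : r ∈ {v | p v = none} := hr
      rw [hroots] at hm; exact hm
    have hlen : 1 ≤ W.length := by
      rcases Nat.eq_zero_or_pos W.length with h0 | h
      · exfalso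
        have hvr := Walk.eq_of_length_eq_zero h0
        rw [← hvr] at hr; rw [hr] at hv; cases hv
      · exact h
    have hcompat : ∀ a b, (pmG p).Adj a b → q a = some b ∨ q b = some a := by
      intro a b hab; rw [hG'] at hab; exact (pmG_adj hq).mp hab
    have horient := orient hcompat hWp.reverse hqr (W.length - 1)
      (by rw [Walk.length_reverse]; omega)
    rw [show W.length - 1 + 1 = W.length by omega] at horient
    rw [Walk.getVert_reverse, Walk.getVert_reverse] at horient
    rw [Nat.sub_self, Walk.getVert_zero] at horient
    rw [show W.length - (W.length - 1) = 1 by omega, hget1] at horient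
    exact horient.symm

lemma rootedForest_ext {R S : RootedForest G} (he : R.edges = S.edges)
    (hr : R.roots = S.roots) : R = S := by
  cases R; cases S
  simp only at he hr
  subst he; subst hr
  rfl

lemma toForest_surj (hacyc : G.IsAcyclic) (R : RootedForest G) :
    ∃ p hp, toForest p hp hacyc = R := by
  classical
  set H := SimpleGraph.fromEdgeSet R.edges with hHdef
  have hHle : H ≤ G := by
    calc H ≤ SimpleGraph.fromEdgeSet G.edgeSet := fromEdgeSet_mono R.edges_sub
    _ = G := fromEdgeSet_edgeSet G
  have hHacyc : H.IsAcyclic := R.acyclic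
  have path_eq : ∀ {a b : V} (P Q : H.Walk a b), P.IsPath → Q.IsPath → P = Q := by
    intro a b P Q hP hQ
    exact congrArg Subtype.val (isAcyclic_iff_path_unique.mp hHacyc ⟨P, hP⟩ ⟨Q, hQ⟩)
  have HedgeSet : H.edgeSet = R.edges := by
    rw [hHdef, edgeSet_fromEdgeSet]
    ext e
    constructor
    · exact fun h => h.1
    · exact fun h => ⟨h, G.not_isDiag_of_mem_edgeSet (R.edges_sub h)⟩
  choose rt hrt using R.unique_root
  have rt_eq : ∀ v w, H.Reachable v w → rt w = rt v :=
    fun v w h => (hrt v).2 (rt w) ⟨(hrt w).1.1, h.trans (hrt w).1.2⟩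
  have mem_roots_iff : ∀ v, v ∈ R.roots ↔ rt v = v := by
    intro v
    constructor
    · intro hv
      exact ((hrt v).2 v ⟨hv, Reachable.refl v⟩).symm
    · intro h
      rw [← h]; exact (hrt v).1.1
  have hwex : ∀ v, ∃ W : H.Walk v (rt v), W.IsPath :=
    fun v => ⟨((hrt v).1.2).some.toPath.1, ((hrt v).1.2).some.toPath.2⟩
  choose pw hpw using hwex
  have hlen_pos : ∀ v, rt v ≠ v → 0 < (pw v).length := by
    intro v h
    rcases Nat.eq_zero_or_pos (pw v).length with h0 | hh
    · exact absurd (Walk.eq_of_length_eq_zero h0).symm h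
    · exact hh
  set p : V → Option V := fun v => if rt v = v then none else some ((pw v).getVert 1)
    with hpdef
  have hadj1 : ∀ v, rt v ≠ v → H.Adj v ((pw v).getVert 1) := by
    intro v h
    have := (pw v).adj_getVert_succ (hlen_pos v h)
    rwa [Walk.getVert_zero] at this
  have hpsome : ∀ v w, p v = some w → rt v ≠ v ∧ (pw v).getVert 1 = w := by
    intro v w hv
    rw [hpdef] at hv
    simp only at hv
    split at hv
    · cases hv
    · exact ⟨by assumption, Option.some_inj.mp hv⟩
  have hp : IsPM G p := by
    constructor
    · intro v w hvw
      obtain ⟨h1, h2⟩ := hpsome v w hvw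
      exact hHle (h2 ▸ hadj1 v h1)
    · intro v w hv hw
      obtain ⟨hv1, hv2⟩ := hpsome v w hv
      obtain ⟨hw1, hw2⟩ := hpsome w v hw
      have hadjvw : H.Adj v w := hv2 ▸ hadj1 v hv1
      have hrteq : rt w = rt v := rt_eq v w hadjvw.reachable
      have hnnil : ¬ (pw v).Nil := Walk.not_nil_iff_lt_length.mpr (hlen_pos v hv1)
      have hlen2 : 2 ≤ (pw v).length := by
        rcases Nat.lt_or_ge (pw v).length 2 with hl | hl
        · exfalso
          have h1 : (pw v).length = 1 := by have := hlen_pos v hv1; omega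
          have h2 : (pw v).getVert 1 = rt v := by
            conv_lhs => rw [← h1]
            exact Walk.getVert_length _
          rw [hv2] at h2
          exact hw1 (hrteq.trans h2.symm)
        · exact hl
      have hconspath := hpw v
      rw [← Walk.cons_tail_eq (pw v) hnnil, Walk.cons_isPath_iff] at hconspath
      have hQ : ((pw w).copy rfl hrteq) = ((pw v).tail).copy hv2 rfl :=
        path_eq _ _ (by rw [Walk.isPath_copy]; exact hpw w)
          (by rw [Walk.isPath_copy]; exact hconspath.1)
      have hv3 : (pw v).getVert 2 = v := by
        have h1 : ((pw w).copy rfl hrteq).getVert 1 = v := by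
          rw [Walk.getVert_copy]; exact hw2
        rw [hQ, Walk.getVert_copy, Walk.getVert_tail _] at h1
        exact h1
      have h0 : (pw v).getVert 0 = v := Walk.getVert_zero _
      have := isPath_getVert_inj (hpw v) (by omega) (by omega) (hv3.trans h0.symm)
      omega
  refine ⟨p, hp, rootedForest_ext ?_ ?_⟩
  · -- edges
    show pmEdges p = R.edges
    ext e
    constructor
    · rintro ⟨v, w, hv, rfl⟩
      obtain ⟨h1, h2⟩ := hpsome v w hv
      rw [← HedgeSet]
      exact (h2 ▸ hadj1 v h1)
    · intro he
      induction e using Sym2.ind with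
      | _ a b =>
      have hne : a ≠ b := by
        have := G.not_isDiag_of_mem_edgeSet (R.edges_sub he)
        simpa using this
      have hHadj : H.Adj a b := by
        rw [← SimpleGraph.mem_edgeSet, HedgeSet]; exact he
      have hr : rt b = rt a := rt_eq a b hHadj.reachable
      have hor : p a = some b ∨ p b = some a := by
        by_cases ha : rt a = a
        · right
          have hrb : rt b = a := hr.trans ha
          have hb : rt b ≠ b := by rw [hrb]; exact hne
          have hS : (Walk.cons hHadj.symm Walk.nil).copy rfl hrb.symm = pw b :=
            path_eq _ _ (by
              rw [Walk.isPath_copy, Walk.cons_isPath_iff]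
              exact ⟨Walk.IsPath.nil, by simp [hne.symm]⟩) (hpw b)
          rw [hpdef]
          simp only [hb, if_neg hb]
          rw [← hS]
          simp [Walk.getVert_copy]
        · by_cases hb : rt b = b
          · left
            have hra : rt a = b := by rw [← hr, hb]
            have hS : (Walk.cons hHadj Walk.nil).copy rfl hra.symm = pw a :=
              path_eq _ _ (by
                rw [Walk.isPath_copy, Walk.cons_isPath_iff]
                exact ⟨Walk.IsPath.nil, by simp [hne]⟩) (hpw a)
            rw [hpdef]
            simp only [if_neg ha]
            rw [← hS]
            simp [Walk.getVert_copy]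
          · -- both not roots
            by_cases hmem : b ∈ (pw a).support
            · left
              have hT := (hpw a).takeUntil hmem
              have htake := (pw a).take_spec hmem
              rcases hTlen : ((pw a).takeUntil b hmem).length with _ | _ | m
              · exact absurd (Walk.eq_of_length_eq_zero hTlen) hne
              · -- length 1 : b is the next vertex
                have hget : (pw a).getVert 1 = b := by
                  rw [← htake, Walk.getVert_append, hTlen]
                  simp
                rw [hpdef]; simp only [if_neg ha, hget]
              · -- length ≥ 2 : produces a cycle, contradiction
                exfalso
                have hedge : s(b, a) ∉ ((pw a).takeUntil b hmem).edges := by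
                  intro hme
                  rw [Sym2.eq_swap] at hme
                  have h1 := isPath_edge_start hT hme
                  have h2 : ((pw a).takeUntil b hmem).getVert
                      ((pw a).takeUntil b hmem).length = b := Walk.getVert_length _
                  have := isPath_getVert_inj hT (by omega) (le_refl _) (h1.trans h2.symm)
                  omega
                exact hHacyc _ (SimpleGraph.Path.cons_isCycle ⟨_, hT⟩ hHadj.symm hedge)
            · right
              have hC : (Walk.cons hHadj.symm (pw a)).copy rfl hr.symm = pw b :=
                path_eq _ _ (by
                  rw [Walk.isPath_copy, Walk.cons_isPath_iff]
                  exact ⟨hpw a, hmem⟩) (hpw b)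
              rw [hpdef]
              simp only [if_neg hb]
              rw [← hC]
              simp [Walk.getVert_copy, Walk.getVert_cons]
      rcases hor with h | h
      · exact ⟨a, b, h, rfl⟩
      · exact ⟨b, a, h, Sym2.eq_swap⟩
  · -- roots
    show {v | p v = none} = R.roots
    ext v
    rw [Set.mem_setOf_eq, hpdef, mem_roots_iff]
    simp only
    split
    · simpa
    · simpa

lemma card_forest (hacyc : G.IsAcyclic) :
    Nat.card (RootedForest G) = Nat.card {p : V → Option V // IsPM G p} := by
  apply Nat.card_congr
  refine (Equiv.ofBijective (fun pp : {p : V → Option V // IsPM G p} =>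
    toForest pp.1 pp.2 hacyc) ⟨?_, ?_⟩).symm
  · rintro ⟨p, hp⟩ ⟨q, hq⟩ h
    exact Subtype.ext (toForest_inj hp hq hacyc h)
  · intro R
    obtain ⟨p, hp, h⟩ := toForest_surj hacyc R
    exact ⟨⟨p, hp⟩, h⟩

end Forest
variable {V : Type*} {G : SimpleGraph V}
section Acyclic

lemma support_getElem? {u v : V} (p : G.Walk u v) :
    ∀ i : ℕ, i ≤ p.length → p.support[i]? = some (p.getVert i) := by
  induction p with
  | nil =>
    intro i hi
    simp only [Walk.length_nil, Nat.le_zero] at hi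
    subst hi
    simp
  | cons h q ih =>
    intro i hi
    match i with
    | 0 => simp
    | i+1 =>
      rw [Walk.support_cons, Walk.getVert_cons_succ]
      simp only [List.getElem?_cons_succ]
      exact ih i (by simpa using hi)

lemma isAcyclic_of_rank (f : V → ℕ)
    (hne : ∀ a b, G.Adj a b → f a ≠ f b)
    (huniq : ∀ a b c, G.Adj a b → G.Adj a c → f b < f a → f c < f a → b = c) :
    G.IsAcyclic := by
  classical
  intro v c hc
  obtain ⟨m, hm, hmax⟩ : ∃ m ∈ c.support, ∀ x ∈ c.support, f x ≤ f m := by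
    obtain ⟨m, hm1, hm2⟩ := Finset.exists_max_image c.support.toFinset f
      ⟨v, List.mem_toFinset.mpr c.start_mem_support⟩
    exact ⟨m, List.mem_toFinset.mp hm1, fun x hx => hm2 x (List.mem_toFinset.mpr hx)⟩
  set c' := c.rotate m hm with hc'def
  have hc' : c'.IsCycle := hc.rotate hm
  set L := c'.length with hLdef
  have hL3 : 3 ≤ L := hc'.three_le_length
  have hmax' : ∀ x ∈ c'.support, f x ≤ f m := by
    intro x hx
    rw [Walk.support_eq_cons] at hx
    rcases List.mem_cons.mp hx with rfl | hx'
    · exact le_refl _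
    · have : x ∈ c.support.tail := (Walk.support_rotate c m hm).mem_iff.mp hx'
      exact hmax x (List.mem_of_mem_tail this)
  have hadj1 : G.Adj m (c'.getVert 1) := by
    have := c'.adj_getVert_succ (i := 0) (by omega)
    rwa [Walk.getVert_zero] at this
  have hadj2 : G.Adj (c'.getVert (L-1)) m := by
    have := c'.adj_getVert_succ (i := L-1) (by omega)
    rwa [show L - 1 + 1 = L by omega, hLdef, Walk.getVert_length] at this
  have hb : f (c'.getVert 1) < f m := by
    refine lt_of_le_of_ne (hmax' _ ?_) (fun h => hne _ _ hadj1 h.symm)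
    exact Walk.mem_support_iff_exists_getVert.mpr ⟨1, rfl, by omega⟩
  have hd : f (c'.getVert (L-1)) < f m := by
    refine lt_of_le_of_ne (hmax' _ ?_) (fun h => hne _ _ hadj2.symm h.symm)
    exact Walk.mem_support_iff_exists_getVert.mpr ⟨L-1, rfl, by omega⟩
  have heq : c'.getVert 1 = c'.getVert (L-1) := huniq m _ _ hadj1 hadj2.symm hb hd
  -- contradiction with nodup of support tail
  have htail : c'.support.tail.Nodup := hc'.support_nodup
  have hlen : c'.support.length = L + 1 := by rw [Walk.length_support]
  have htlen : c'.support.tail.length = L := by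
    rw [List.length_tail, hlen]
    omega
  have h1 : c'.support.tail[0]? = some (c'.getVert 1) := by
    have := support_getElem? c' 1 (by omega)
    rw [Walk.support_eq_cons] at this
    simpa using this
  have h2 : c'.support.tail[L-2]? = some (c'.getVert (L-1)) := by
    have := support_getElem? c' (L-1) (by omega)
    rw [Walk.support_eq_cons] at this
    rw [show L - 1 = (L-2) + 1 by omega] at this ⊢
    simpa using this
  have : (0 : ℕ) = L - 2 := by
    apply (List.getElem?_inj (i := 0) (by omega) htail).mp
    rw [h1, h2, heq]
  omega

def catRank (n : ℕ) : Fin n → ℕ := fun v =>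
  if v.val = 0 then 1 else if v.val = 1 then 2 else if v.val = 2 then 0 else v.val

lemma cat_adj {n : ℕ} {v w : Fin n} : (tCaterpillar n).Adj v w ↔
    ((v.val = 0 ∧ w.val = 2) ∨ (v.val = 1 ∧ w.val = 2) ∨ (2 ≤ v.val ∧ w.val = v.val + 1)) ∨
    ((w.val = 0 ∧ v.val = 2) ∨ (w.val = 1 ∧ v.val = 2) ∨ (2 ≤ w.val ∧ v.val = w.val + 1)) := by
  rw [tCaterpillar, SimpleGraph.fromRel_adj]
  constructor
  · rintro ⟨-, h⟩; exact h
  · intro h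
    refine ⟨fun hvw => ?_, h⟩
    subst hvw
    omega

lemma tCaterpillar_isAcyclic (n : ℕ) : (tCaterpillar n).IsAcyclic := by
  apply isAcyclic_of_rank (catRank n)
  · intro a b hab
    rw [cat_adj] at hab
    unfold catRank
    split_ifs <;> omega
  · intro a b c hab hac hfb hfc
    rw [cat_adj] at hab hac
    apply Fin.ext
    unfold catRank at hfb hfc
    split_ifs at hfb hfc <;> omega

end Acyclic
section Caterpillar

def PMc (n : ℕ) := {p : Fin n → Option (Fin n) // IsPM (tCaterpillar n) p}

def Gc (n : ℕ) := {p : PMc (n+1) // p.1 (Fin.last n) = none}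

instance {n : ℕ} : Finite (PMc n) := Subtype.finite
instance {n : ℕ} : Finite (Gc n) := Subtype.finite

lemma cat_adj_castSucc {n : ℕ} {v w : Fin (n+1)} :
    (tCaterpillar (n+2)).Adj v.castSucc w.castSucc ↔ (tCaterpillar (n+1)).Adj v w := by
  rw [cat_adj, cat_adj]
  simp only [Fin.coe_castSucc]

lemma cat_adj_last {n : ℕ} (hn : 3 ≤ n) {w : Fin (n+2)} :
    (tCaterpillar (n+2)).Adj (Fin.last (n+1)) w ↔ w.val = n := by
  have hw := w.isLt
  rw [cat_adj]
  simp only [Fin.val_last]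
  omega

variable {n : ℕ}

def resc (q : Fin (n+2) → Option (Fin (n+2))) : Fin (n+1) → Option (Fin (n+1)) :=
  fun v => (q v.castSucc).bind fun w =>
    if h : w = Fin.last (n+1) then none else some (w.castPred h)

def ext0 (p : Fin (n+1) → Option (Fin (n+1))) : Fin (n+2) → Option (Fin (n+2)) :=
  fun v => if h : v = Fin.last (n+1) then none else (p (v.castPred h)).map Fin.castSucc

def ext2 (p : Fin (n+1) → Option (Fin (n+1))) : Fin (n+2) → Option (Fin (n+2)) :=
  fun v => if h : v = Fin.last (n+1) then some ((Fin.last n).castSucc)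
    else (p (v.castPred h)).map Fin.castSucc

def ext1 (p : Fin (n+1) → Option (Fin (n+1))) : Fin (n+2) → Option (Fin (n+2)) :=
  fun v => if h : v = Fin.last (n+1) then none
    else if v = (Fin.last n).castSucc then some (Fin.last (n+1))
    else (p (v.castPred h)).map Fin.castSucc

lemma pen_ne_last : (Fin.last n).castSucc ≠ Fin.last (n+1) :=
  (Fin.castSucc_lt_last _).ne

lemma map_castSucc_ne_some_last (o : Option (Fin (n+1))) :
    o.map Fin.castSucc ≠ some (Fin.last (n+1)) := by
  cases o with
  | none => simp
  | some a =>
    simp only [Option.map_some, ne_eq, Option.some_inj]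
    exact (Fin.castSucc_lt_last a).ne

/-- only the penultimate vertex can point to the last vertex -/
lemma eq_pen_of_some_last (hn : 3 ≤ n) {q : Fin (n+2) → Option (Fin (n+2))}
    (hq : IsPM (tCaterpillar (n+2)) q) {v : Fin (n+2)}
    (hv : q v = some (Fin.last (n+1))) : v = (Fin.last n).castSucc := by
  have hadj := (hq.1 v _ hv).symm
  rw [cat_adj_last hn] at hadj
  apply Fin.ext
  rw [hadj]
  simp

lemma eq_pen_of_last_some (hn : 3 ≤ n) {q : Fin (n+2) → Option (Fin (n+2))}
    (hq : IsPM (tCaterpillar (n+2)) q) {w : Fin (n+2)}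
    (hw : q (Fin.last (n+1)) = some w) : w = (Fin.last n).castSucc := by
  have hadj := hq.1 _ _ hw
  rw [cat_adj_last hn] at hadj
  apply Fin.ext
  rw [hadj]
  simp

lemma resc_valid (hn : 3 ≤ n) {q : Fin (n+2) → Option (Fin (n+2))}
    (hq : IsPM (tCaterpillar (n+2)) q) : IsPM (tCaterpillar (n+1)) (resc q) := by
  constructor
  · intro v w' hvw
    rw [resc, Option.bind_eq_some_iff] at hvw
    obtain ⟨w, hw, hcast⟩ := hvw
    split at hcast
    · cases hcast
    · rename_i hwlast
      have hadj := hq.1 _ _ hw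
      rw [Option.some_inj] at hcast
      rw [← hcast]
      rw [← cat_adj_castSucc (n := n)]
      rwa [Fin.castSucc_castPred]
  · intro v w' hvw hwv
    rw [resc, Option.bind_eq_some_iff] at hvw hwv
    obtain ⟨w, hw, hcast⟩ := hvw
    obtain ⟨u, hu, hcast'⟩ := hwv
    split at hcast
    · cases hcast
    · rename_i hwlast
      rw [Option.some_inj] at hcast
      split at hcast'
      · cases hcast'
      · rename_i hulast
        rw [Option.some_inj] at hcast'
        have hw' : w = w'.castSucc := by rw [← hcast, Fin.castSucc_castPred]
        have hu' : u = v.castSucc := by rw [← hcast', Fin.castSucc_castPred]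
        rw [hw'] at hw
        rw [hu'] at hu
        exact hq.2 _ _ hw hu

lemma ext0_valid {p : Fin (n+1) → Option (Fin (n+1))}
    (hp : IsPM (tCaterpillar (n+1)) p) : IsPM (tCaterpillar (n+2)) (ext0 p) := by
  constructor
  · intro v w hvw
    rw [ext0] at hvw
    split at hvw
    · cases hvw
    · rename_i hvlast
      rw [Option.map_eq_some_iff] at hvw
      obtain ⟨w', hw', rfl⟩ := hvw
      have := (cat_adj_castSucc (n := n)).mpr (hp.1 _ _ hw')
      rwa [Fin.castSucc_castPred] at this
  · intro v w hvw hwv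
    rw [ext0] at hvw hwv
    split at hvw
    · cases hvw
    · rename_i hvlast
      rw [Option.map_eq_some_iff] at hvw
      obtain ⟨w', hw', rfl⟩ := hvw
      split at hwv
      · rename_i h
        exact absurd h (Fin.castSucc_lt_last w').ne
      · rename_i hwlast
        rw [Option.map_eq_some_iff] at hwv
        obtain ⟨v', hv', hvv⟩ := hwv
        rw [Fin.castPred_castSucc] at hv'
        have hveq : v' = v.castPred hvlast := by
          apply Fin.castSucc_inj.mp
          rw [hvv, Fin.castSucc_castPred]
        rw [hveq] at hv'
        exact hp.2 _ _ hw' hv'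

lemma ext2_valid (hn : 3 ≤ n) {p : Fin (n+1) → Option (Fin (n+1))}
    (hp : IsPM (tCaterpillar (n+1)) p) : IsPM (tCaterpillar (n+2)) (ext2 p) := by
  constructor
  · intro v w hvw
    rw [ext2] at hvw
    split at hvw
    · rename_i hv
      rw [Option.some_inj] at hvw
      subst hv
      rw [← hvw, cat_adj_last hn]
      simp
    · rename_i hv
      exact (ext0_valid hp).1 v w (by rw [ext0, dif_neg hv]; exact hvw)
  · intro v w hvw hwv
    rw [ext2] at hvw hwv
    split at hvw
    · rename_i hv
      rw [Option.some_inj] at hvw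
      subst hv
      rw [← hvw, dif_neg pen_ne_last] at hwv
      exact map_castSucc_ne_some_last _ hwv
    · rename_i hv
      have hwne : w ≠ Fin.last (n+1) := by
        rintro rfl
        exact map_castSucc_ne_some_last _ hvw
      rw [dif_neg hwne] at hwv
      exact (ext0_valid hp).2 v w (by rw [ext0, dif_neg hv]; exact hvw)
        (by rw [ext0, dif_neg hwne]; exact hwv)

lemma ext1_valid (hn : 3 ≤ n) {p : Fin (n+1) → Option (Fin (n+1))}
    (hp : IsPM (tCaterpillar (n+1)) p) (hl : p (Fin.last n) = none) :
    IsPM (tCaterpillar (n+2)) (ext1 p) := by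
  constructor
  · intro v w hvw
    rw [ext1] at hvw
    split at hvw
    · cases hvw
    · rename_i hv
      split at hvw
      · rename_i hvpen
        rw [Option.some_inj] at hvw
        subst hvpen
        rw [← hvw]
        exact ((cat_adj_last hn).mpr (by simp)).symm
      · exact (ext0_valid hp).1 v w (by rw [ext0, dif_neg hv]; exact hvw)
  · intro v w hvw hwv
    rw [ext1] at hvw hwv
    split at hvw
    · cases hvw
    · rename_i hv
      split at hvw
      · rename_i hvpen
        rw [Option.some_inj] at hvw
        rw [← hvw] at hwv
        rw [dif_pos rfl] at hwv
        cases hwv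
      · rename_i hvpen
        have hwne : w ≠ Fin.last (n+1) := by
          rintro rfl
          exact map_castSucc_ne_some_last _ hvw
        rw [dif_neg hwne] at hwv
        split at hwv
        · rename_i hwpen
          -- w = pen, and ext1 pen = some last = some v → v = last, contradiction hv
          rw [Option.some_inj] at hwv
          exact hv hwv.symm
        · exact (ext0_valid hp).2 v w (by rw [ext0, dif_neg hv]; exact hvw)
            (by rw [ext0, dif_neg hwne]; exact hwv)

end Caterpillar
section Equivs

variable {n : ℕ}

lemma resc_ext0 (p : Fin (n+1) → Option (Fin (n+1))) : resc (ext0 p) = p := by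
  funext v
  rw [resc, ext0, dif_neg (Fin.castSucc_lt_last v).ne, Fin.castPred_castSucc]
  cases hv : p v with
  | none => simp
  | some w =>
    simp only [Option.map_some, Option.bind_some]
    rw [dif_neg (Fin.castSucc_lt_last w).ne, Fin.castPred_castSucc]

lemma resc_ext2 (p : Fin (n+1) → Option (Fin (n+1))) : resc (ext2 p) = p := by
  funext v
  rw [resc, ext2, dif_neg (Fin.castSucc_lt_last v).ne, Fin.castPred_castSucc]
  cases hv : p v with
  | none => simp
  | some w =>
    simp only [Option.map_some, Option.bind_some]
    rw [dif_neg (Fin.castSucc_lt_last w).ne, Fin.castPred_castSucc]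

lemma resc_ext1 {p : Fin (n+1) → Option (Fin (n+1))} (hl : p (Fin.last n) = none) :
    resc (ext1 p) = p := by
  funext v
  rw [resc, ext1, dif_neg (Fin.castSucc_lt_last v).ne]
  by_cases hv : v = Fin.last n
  · subst hv
    rw [if_pos rfl]
    simp [hl]
  · rw [if_neg (fun h => hv (Fin.castSucc_injective _ h)), Fin.castPred_castSucc]
    cases hpv : p v with
    | none => simp
    | some w =>
      simp only [Option.map_some, Option.bind_some]
      rw [dif_neg (Fin.castSucc_lt_last w).ne, Fin.castPred_castSucc]

lemma ext0_resc (hn : 3 ≤ n) {q : Fin (n+2) → Option (Fin (n+2))}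
    (hq : IsPM (tCaterpillar (n+2)) q) (hlast : q (Fin.last (n+1)) = none)
    (hpen : q ((Fin.last n).castSucc) ≠ some (Fin.last (n+1))) : ext0 (resc q) = q := by
  funext v
  rw [ext0]
  split
  · rename_i h; subst h; exact hlast.symm
  · rename_i hv
    rw [resc, Fin.castSucc_castPred]
    cases hqv : q v with
    | none => simp
    | some w =>
      have hwne : w ≠ Fin.last (n+1) := by
        rintro rfl
        exact hpen ((eq_pen_of_some_last hn hq hqv) ▸ hqv)
      simp only [Option.bind_some]
      rw [dif_neg hwne]
      simp only [Option.map_some]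
      rw [Fin.castSucc_castPred]

lemma ext2_resc (hn : 3 ≤ n) {q : Fin (n+2) → Option (Fin (n+2))}
    (hq : IsPM (tCaterpillar (n+2)) q)
    (hlast : q (Fin.last (n+1)) = some ((Fin.last n).castSucc)) : ext2 (resc q) = q := by
  funext v
  rw [ext2]
  split
  · rename_i h; subst h; exact hlast.symm
  · rename_i hv
    rw [resc, Fin.castSucc_castPred]
    cases hqv : q v with
    | none => simp
    | some w =>
      have hwne : w ≠ Fin.last (n+1) := by
        rintro rfl
        have hvpen := eq_pen_of_some_last hn hq hqv
        subst hvpen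
        exact hq.2 _ _ hqv hlast
      simp only [Option.bind_some]
      rw [dif_neg hwne]
      simp only [Option.map_some]
      rw [Fin.castSucc_castPred]

lemma ext1_resc (hn : 3 ≤ n) {q : Fin (n+2) → Option (Fin (n+2))}
    (hq : IsPM (tCaterpillar (n+2)) q) (hlast : q (Fin.last (n+1)) = none)
    (hpen : q ((Fin.last n).castSucc) = some (Fin.last (n+1))) : ext1 (resc q) = q := by
  funext v
  rw [ext1]
  split
  · rename_i h; subst h; exact hlast.symm
  · rename_i hv
    split
    · rename_i hvpen; subst hvpen; exact hpen.symm
    · rename_i hvpen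
      rw [resc, Fin.castSucc_castPred]
      cases hqv : q v with
      | none => simp
      | some w =>
        have hwne : w ≠ Fin.last (n+1) := by
          rintro rfl
          exact hvpen (eq_pen_of_some_last hn hq hqv)
        simp only [Option.bind_some]
        rw [dif_neg hwne]
        simp only [Option.map_some]
        rw [Fin.castSucc_castPred]

noncomputable def equivStep2 (hn : 3 ≤ n) : PMc (n+2) ≃ (Gc (n+1) ⊕ PMc (n+1)) where
  toFun q := if h : q.1 (Fin.last (n+1)) = none then Sum.inl ⟨q, h⟩
    else Sum.inr ⟨resc q.1, resc_valid hn q.2⟩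
  invFun x := match x with
    | Sum.inl g => g.1
    | Sum.inr p => ⟨ext2 p.1, ext2_valid hn p.2⟩
  left_inv q := by
    by_cases h : q.1 (Fin.last (n+1)) = none
    · simp [h]
    · simp only [dif_neg h]
      apply Subtype.ext
      have hsome : q.1 (Fin.last (n+1)) = some ((Fin.last n).castSucc) := by
        obtain ⟨w, hw⟩ := Option.ne_none_iff_exists'.mp h
        rw [hw, eq_pen_of_last_some hn q.2 hw]
      exact ext2_resc hn q.2 hsome
  right_inv x := by
    match x with
    | Sum.inl g =>
      simp only []
      rw [dif_pos g.2]
      rfl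
    | Sum.inr p =>
      have h2 : (ext2 p.1) (Fin.last (n+1)) = some ((Fin.last n).castSucc) := by
        rw [ext2, dif_pos rfl]
      simp only []
      rw [dif_neg (by rw [h2]; simp)]
      exact congrArg Sum.inr (Subtype.ext (resc_ext2 p.1))

noncomputable def equivStep1 (hn : 3 ≤ n) : Gc (n+1) ≃ (PMc (n+1) ⊕ Gc n) where
  toFun g := if h : g.1.1 ((Fin.last n).castSucc) = some (Fin.last (n+1))
    then Sum.inr ⟨⟨resc g.1.1, resc_valid hn g.1.2⟩, by
      show resc g.1.1 (Fin.last n) = none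
      rw [resc, h]
      simp⟩
    else Sum.inl ⟨resc g.1.1, resc_valid hn g.1.2⟩
  invFun x := match x with
    | Sum.inl p => ⟨⟨ext0 p.1, ext0_valid p.2⟩, by
        show ext0 p.1 (Fin.last (n+1)) = none
        rw [ext0, dif_pos rfl]⟩
    | Sum.inr g' => ⟨⟨ext1 g'.1.1, ext1_valid hn g'.1.2 g'.2⟩, by
        show ext1 g'.1.1 (Fin.last (n+1)) = none
        rw [ext1, dif_pos rfl]⟩
  left_inv g := by
    by_cases h : g.1.1 ((Fin.last n).castSucc) = some (Fin.last (n+1))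
    · simp only [dif_pos h]
      exact Subtype.ext (Subtype.ext (ext1_resc hn g.1.2 g.2 h))
    · simp only [dif_neg h]
      exact Subtype.ext (Subtype.ext (ext0_resc hn g.1.2 g.2 h))
  right_inv x := by
    match x with
    | Sum.inl p =>
      have hc : ext0 p.1 ((Fin.last n).castSucc) ≠ some (Fin.last (n+1)) := by
        rw [ext0, dif_neg pen_ne_last]
        exact map_castSucc_ne_some_last _
      simp only []
      rw [dif_neg hc]
      exact congrArg Sum.inl (Subtype.ext (resc_ext0 p.1))
    | Sum.inr g' =>
      have hc : ext1 g'.1.1 ((Fin.last n).castSucc) = some (Fin.last (n+1)) := by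
        rw [ext1, dif_neg pen_ne_last, if_pos rfl]
      simp only []
      rw [dif_pos hc]
      exact congrArg Sum.inr (Subtype.ext (Subtype.ext (resc_ext1 g'.2)))

lemma card_PMc_step (hn : 3 ≤ n) :
    Nat.card (PMc (n+2)) = Nat.card (Gc (n+1)) + Nat.card (PMc (n+1)) := by
  rw [Nat.card_congr (equivStep2 hn), Nat.card_sum]

lemma card_Gc_step (hn : 3 ≤ n) :
    Nat.card (Gc (n+1)) = Nat.card (PMc (n+1)) + Nat.card (Gc n) := by
  rw [Nat.card_congr (equivStep1 hn), Nat.card_sum]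

end Equivs

section Count

instance {n : ℕ} : DecidableRel (tCaterpillar n).Adj := fun v w =>
  decidable_of_iff' _ (SimpleGraph.fromRel_adj _ v w)

instance {V : Type*} [Fintype V] [DecidableEq V] (G : SimpleGraph V) [DecidableRel G.Adj] :
    DecidablePred (IsPM G) := fun p => by unfold IsPM; infer_instance

instance {n : ℕ} : Fintype (PMc n) :=
  inferInstanceAs (Fintype {p // IsPM (tCaterpillar n) p})
instance {n : ℕ} : Fintype (Gc n) :=
  inferInstanceAs (Fintype {p : PMc (n+1) // p.1 (Fin.last n) = none})

lemma base1 : Nat.card (PMc 4) = 20 := by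
  rw [Nat.card_eq_fintype_card]
  decide

lemma base2 : Nat.card (Gc 3) = 12 := by
  rw [Nat.card_eq_fintype_card]
  decide

lemma cards : ∀ k : ℕ, Nat.card (PMc (k+4)) = 4 * Nat.fib (2*k+5) ∧
    Nat.card (Gc (k+3)) = 4 * Nat.fib (2*k+4) := by
  intro k
  induction k with
  | zero =>
    refine ⟨?_, ?_⟩
    · rw [base1]; decide
    · rw [base2]; decide
  | succ k ih =>
    obtain ⟨ih1, ih2⟩ := ih
    have hGstep : Nat.card (Gc (k+4)) = Nat.card (PMc (k+4)) + Nat.card (Gc (k+3)) := by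
      have := card_Gc_step (n := k+3) (by omega)
      convert this using 3 <;> omega
    have hf2 : Nat.fib (2*k+6) = Nat.fib (2*k+4) + Nat.fib (2*k+5) := by
      rw [show 2*k+6 = (2*k+4)+2 by ring, Nat.fib_add_two, show (2*k+4)+1 = 2*k+5 by ring]
    have hGval : Nat.card (Gc (k+4)) = 4 * Nat.fib (2*k+6) := by
      rw [hGstep, ih1, ih2, hf2]
      ring
    constructor
    · have hPstep : Nat.card (PMc (k+5)) = Nat.card (Gc (k+4)) + Nat.card (PMc (k+4)) := by
        have := card_PMc_step (n := k+3) (by omega)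
        convert this using 3 <;> omega
      have hf : Nat.fib (2*(k+1)+5) = Nat.fib (2*k+6) + Nat.fib (2*k+5) := by
        rw [show 2*(k+1)+5 = (2*k+5)+2 by ring, Nat.fib_add_two,
          show (2*k+5)+1 = 2*k+6 by ring]
        exact Nat.add_comm _ _
      rw [show k+1+4 = k+5 by omega, hPstep, hGval, ih1, hf]
      ring
    · rw [show k+1+3 = k+4 by omega, hGval, show 2*(k+1)+4 = 2*k+6 by ring]

end Count
end RFAux

theorem tCaterpillar_forest_count (n : ℕ) (hn : 4 ≤ n) :
    Nat.card (RootedForest (tCaterpillar n)) = 4 * Nat.fib (2 * n - 3) := by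
  obtain ⟨k, rfl⟩ : ∃ k, n = k + 4 := ⟨n - 4, by omega⟩
  have hcard := RFAux.card_forest (G := tCaterpillar (k+4)) (RFAux.tCaterpillar_isAcyclic (k+4))
  rw [hcard]
  have h : Nat.card (RFAux.PMc (k+4)) = 4 * Nat.fib (2*k+5) := (RFAux.cards k).1
  have heq : Nat.card {p : Fin (k+4) → Option (Fin (k+4)) // RFAux.IsPM (tCaterpillar (k+4)) p}
      = Nat.card (RFAux.PMc (k+4)) := rfl
  rw [heq, h, show 2*(k+4)-3 = 2*k+5 by omega]
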